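/- Let A ∈ ℝ^{p×p}, B ∈ ℝ^{p×q}, C ∈ ℝ^{m×p}, K ∈ ℝ^{q×p}, L ∈ ℝ^{p×m}. Define A̲ = [[A, BK], [−LC, A+BK+LC]], B̲ = [B; B], and C̲ = [C, 0] ∈ ℝ^{m×2p}. Then for every integer r ≥ 0, C̲ · A̲^r · B̲ = C(A+BK)^r B. In particular, if k' = min{k ≥ 0 : C(A+BK)^k B ≠ 0} exists and Σ_E ∈ ℝ^{q×q} is invertible, then C̲ · A̲^{k'} · B̲ · Σ_E ≠ 0. -/

import Mathlib

open Matrix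

/-- With `A̲ = [[A, BK], [−LC, A+BK+LC]]`, `B̲ = [B; B]` and `C̲ = [C, 0]`,
we have `C̲ A̲^r B̲ = C(A+BK)^r B` for every `r ≥ 0`.  In particular, if
`k' = min{k ≥ 0 : C(A+BK)^k B ≠ 0}` exists and `Σ_E` is invertible, then
`C̲ A̲^{k'} B̲ Σ_E ≠ 0`. -/
theorem underlineC_pow_underlineB
    (p q m : ℕ)
    (A : Matrix (Fin p) (Fin p) ℝ) (B : Matrix (Fin p) (Fin q) ℝ)
    (C : Matrix (Fin m) (Fin p) ℝ) (K : Matrix (Fin q) (Fin p) ℝ)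
    (L : Matrix (Fin p) (Fin m) ℝ) :
    (∀ r : ℕ,
      (Matrix.fromCols C 0 : Matrix (Fin m) (Fin p ⊕ Fin p) ℝ) *
          (Matrix.fromBlocks A (B * K) (-(L * C)) (A + B * K + L * C)) ^ r *
          Matrix.fromRows B B =
        C * (A + B * K) ^ r * B) ∧
    ∀ (k' : ℕ) (_ : C * (A + B * K) ^ k' * B ≠ 0)
      (_ : ∀ j < k', C * (A + B * K) ^ j * B = 0)
      (SigmaE : Matrix (Fin q) (Fin q) ℝ) (_ : IsUnit SigmaE),
      (Matrix.fromCols C 0 : Matrix (Fin m) (Fin p ⊕ Fin p) ℝ) *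
          (Matrix.fromBlocks A (B * K) (-(L * C)) (A + B * K + L * C)) ^ k' *
          Matrix.fromRows B B * SigmaE ≠ 0 := by
  set M := A + B * K with hM
  have key : ∀ r : ℕ,
      (Matrix.fromBlocks A (B * K) (-(L * C)) (A + B * K + L * C)) ^ r *
        Matrix.fromRows B B = Matrix.fromRows (M ^ r * B) (M ^ r * B) := by
    intro r
    induction r with
    | zero => simp
    | succ n ih =>
      rw [pow_succ', Matrix.mul_assoc, ih, Matrix.fromBlocks_mul_fromRows]
      rw [pow_succ', Matrix.mul_assoc]
      simp only [hM, Matrix.add_mul, Matrix.neg_mul, Matrix.mul_assoc]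
      abel_nf
  have main : ∀ r : ℕ,
      (Matrix.fromCols C 0 : Matrix (Fin m) (Fin p ⊕ Fin p) ℝ) *
          (Matrix.fromBlocks A (B * K) (-(L * C)) (A + B * K + L * C)) ^ r *
          Matrix.fromRows B B = C * M ^ r * B := by
    intro r
    rw [Matrix.mul_assoc, key, Matrix.fromCols_mul_fromRows]
    simp [Matrix.mul_assoc]
  refine ⟨main, ?_⟩
  intro k' hne _ SigmaE hS hzero
  rw [main] at hzero
  obtain ⟨u, hu⟩ := hS
  apply hne
  have := congrArg (· * (↑u⁻¹ : Matrix (Fin q) (Fin q) ℝ)) hzero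
  simp only [Matrix.mul_assoc, hu.symm, Units.mul_inv, Matrix.mul_one, zero_mul] at this
  simpa [← Matrix.mul_assoc, ← hM] using this
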